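/- Let (W,S) be a Coxeter system and S^f the set of subsets X ⊆ S with W_X finite. Define a relation ≤ on W × S^f by (u,X) ≤ (v,Y) iff X ⊆ Y, v⁻¹u ∈ W_Y, and v⁻¹u is (∅,X)-reduced. Then ≤ is a partial order on W × S^f. -/

import Mathlib

/-- The standard parabolic subgroup `W_X` of a Coxeter group. -/
def CoxeterSystem.parabolic {B W : Type*} [Group W] {M : CoxeterMatrix B}
    (cs : CoxeterSystem M W) (X : Set B) : Subgroup W :=
  Subgroup.closure (cs.simple '' X)

/-- `X` is a spherical subset: the parabolic subgroup `W_X` is finite. -/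
def CoxeterSystem.IsSpherical {B W : Type*} [Group W] {M : CoxeterMatrix B}
    (cs : CoxeterSystem M W) (X : Set B) : Prop :=
  (cs.parabolic X : Set W).Finite

/-- The relation `(u,X) ≤ (v,Y)` iff `X ⊆ Y`, `v⁻¹u ∈ W_Y`, and `v⁻¹u` is
`(∅,X)`-reduced. -/
def CoxeterSystem.cdsLE {B W : Type*} [Group W] {M : CoxeterMatrix B}
    (cs : CoxeterSystem M W) (p q : W × Set B) : Prop :=
  p.2 ⊆ q.2 ∧ q.1⁻¹ * p.1 ∈ cs.parabolic q.2 ∧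
    ∀ u ∈ cs.parabolic p.2,
      cs.length (q.1⁻¹ * p.1) ≤ cs.length (q.1⁻¹ * p.1 * u)


open List Function

namespace CdsAux

variable {B W : Type*} [Group W] {M : CoxeterMatrix B} (cs : CoxeterSystem M W)

local notation "s" => cs.simple
local notation "π" => cs.wordProd
local notation "ℓ" => cs.length

lemma simple_conj_eq_simple_iff (i : B) (t : W) :
    s i * t * s i = s i ↔ t = s i := by
  constructor
  · intro h
    calc t = (s i)⁻¹ * (s i * t * s i) * (s i)⁻¹ := by group
    _ = (s i)⁻¹ * (s i) * (s i)⁻¹ := by rw [h]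
    _ = (s i)⁻¹ := by group
    _ = s i := cs.inv_simple i
  · rintro rfl; rw [cs.simple_mul_simple_self, one_mul]

open scoped Classical in
/-- The permutation of `W × ZMod 2` attached to a simple reflection. -/
noncomputable def sigma (i : B) : Equiv.Perm (W × ZMod 2) :=
  Involutive.toPerm (fun x => (s i * x.1 * s i, x.2 + if x.1 = s i then 1 else 0)) (by
    intro ⟨t, ε⟩
    simp only [Prod.mk.injEq]
    constructor
    · calc s i * (s i * t * s i) * s i = (s i * s i) * t * (s i * s i) := by group
      _ = t := by rw [cs.simple_mul_simple_self]; group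
    · have hcond := simple_conj_eq_simple_iff cs i t
      rcases eq_or_ne t (s i) with h | h
      · rw [if_pos h, if_pos (hcond.mpr h), add_assoc,
          show (1 : ZMod 2) + 1 = 0 by decide, add_zero]
      · rw [if_neg h, if_neg (hcond.not.mpr h), add_zero, add_zero]
  )

open scoped Classical in
lemma sigma_apply (i : B) (t : W) (ε : ZMod 2) :
    sigma cs i (t, ε) = (s i * t * s i, ε + if t = s i then 1 else 0) := by
  simp [sigma, Involutive.coe_toPerm]
  rfl

/-- The sequence of reflections appearing in the inversion parity computation for
the dihedral braid word. -/
noncomputable def fseq (i j : B) (n : ℕ) : W :=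
  (s i * s j) ^ (-((n / 2 : ℕ) : ℤ)) * s j * (s i * s j) ^ (((n + 1) / 2 : ℕ) : ℤ)

lemma conj_eq_iff (g x y : W) : g * x * g⁻¹ = y ↔ x = g⁻¹ * y * g := by
  constructor
  · rintro rfl; group
  · rintro rfl; group

open scoped Classical in
lemma sigma_pow_apply (i j : B) (k : ℕ) (t : W) (ε : ZMod 2) :
    ((sigma cs i * sigma cs j) ^ k) (t, ε) =
      ((s i * s j) ^ k * t * ((s i * s j) ^ k)⁻¹,
        ε + ∑ n ∈ Finset.range (2 * k), if t = fseq cs i j n then 1 else 0) := by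
  induction k with
  | zero => simp
  | succ k ih =>
    set a := s i with ha
    set b := s j with hb
    set c := a * b with hc
    rw [pow_succ', Equiv.Perm.mul_apply, ih, Equiv.Perm.mul_apply, sigma_apply, sigma_apply]
    have hb2 : b * b = 1 := cs.simple_mul_simple_self j
    have ha2 : a * a = 1 := cs.simple_mul_simple_self i
    have hainv : a⁻¹ = a := cs.inv_simple i
    have hbinv : b⁻¹ = b := cs.inv_simple j
    have e1 : (c ^ k * t * (c ^ k)⁻¹ = b) ↔ (t = fseq cs i j (2 * k)) := by
      rw [conj_eq_iff]
      have h0 : fseq cs i j (2 * k) = (c ^ k)⁻¹ * b * c ^ k := by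
        unfold fseq
        rw [← ha, ← hb, ← hc]
        have h1 : (2 * k) / 2 = k := by omega
        have h2 : (2 * k + 1) / 2 = k := by omega
        simp only [h1, h2, zpow_neg, zpow_natCast]
      rw [h0]
    have e2 : (b * (c ^ k * t * (c ^ k)⁻¹) * b = a) ↔ (t = fseq cs i j (2 * k + 1)) := by
      have hstep : b * (c ^ k * t * (c ^ k)⁻¹) * b = a ↔
          c ^ k * t * (c ^ k)⁻¹ = b * a * b := by
        constructor
        · intro h
          calc c ^ k * t * (c ^ k)⁻¹
              = (b * b) * (c ^ k * t * (c ^ k)⁻¹) * (b * b) := by rw [hb2]; group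
            _ = b * (b * (c ^ k * t * (c ^ k)⁻¹) * b) * b := by group
            _ = b * a * b := by rw [h]
        · intro h
          rw [h]
          calc b * (b * a * b) * b = (b * b) * a * (b * b) := by group
            _ = a := by rw [hb2]; group
      rw [hstep, conj_eq_iff]
      have h0 : fseq cs i j (2 * k + 1) = (c ^ k)⁻¹ * (b * a * b) * c ^ k := by
        unfold fseq
        rw [← ha, ← hb, ← hc]
        have h1 : (2 * k + 1) / 2 = k := by omega
        have h2 : (2 * k + 1 + 1) / 2 = k + 1 := by omega
        simp only [h1, h2, zpow_neg, zpow_natCast]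
        rw [pow_succ' c k, hc]
        simp only [mul_assoc]
      rw [h0]
    have hcinv : (c ^ (k+1))⁻¹ = (c ^ k)⁻¹ * (b * a) := by
      rw [pow_succ' c k, mul_inv_rev, hc, mul_inv_rev, hainv, hbinv]
    have efirst : a * (b * (c ^ k * t * (c ^ k)⁻¹) * b) * a
        = c ^ (k + 1) * t * (c ^ (k + 1))⁻¹ := by
      rw [hcinv, pow_succ' c k, hc]
      simp only [mul_assoc]
    have hsum : ∑ n ∈ Finset.range (2 * (k + 1)), (if t = fseq cs i j n then (1 : ZMod 2) else 0)
        = (∑ n ∈ Finset.range (2 * k), if t = fseq cs i j n then (1 : ZMod 2) else 0)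
          + (if t = fseq cs i j (2 * k) then 1 else 0)
          + (if t = fseq cs i j (2 * k + 1) then 1 else 0) := by
      rw [show 2 * (k + 1) = 2 * k + 1 + 1 from by ring, Finset.sum_range_succ,
        Finset.sum_range_succ]
    simp only [Prod.mk.injEq]
    refine ⟨efirst, ?_⟩
    rw [hsum, if_congr e1 rfl rfl, if_congr e2 rfl rfl]
    ring

open scoped Classical in
lemma isLiftable : M.IsLiftable (fun i => sigma cs i) := by
  intro i j
  set m := M i j with hm
  set a := s i with ha
  set b := s j with hb
  set c := a * b with hc
  have hcm : c ^ m = 1 := cs.simple_mul_simple_pow i j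
  have hsc : ∀ z : ℤ, b * c ^ z = c ^ (-z) * b := by
    have h1 : SemiconjBy b c c⁻¹ := by
      show b * c = c⁻¹ * b
      rw [hc, mul_inv_rev, cs.inv_simple, cs.inv_simple, ← ha, ← hb]
      simp [mul_assoc]
    intro z
    have := h1.zpow_right z
    rw [SemiconjBy] at this
    rw [this, inv_zpow, zpow_neg]
  have hfseq : ∀ n : ℕ, fseq cs i j (m + n) = fseq cs i j n := by
    intro n
    unfold fseq
    rw [← ha, ← hb, ← hc]
    set E1 : ℕ := (m + n) / 2 with hE1
    set E2 : ℕ := (m + n + 1) / 2 with hE2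
    set v1 : ℕ := n / 2 with hv1
    set v2 : ℕ := (n + 1) / 2 with hv2
    set d : ℤ := (E1 : ℤ) - (v1 : ℤ) with hd
    have hz1 : -(E1 : ℤ) = -(v1 : ℤ) + -d := by omega
    have hz2 : (E2 : ℤ) = ((m : ℤ) - d) + (v2 : ℤ) := by omega
    rw [hz1, hz2, zpow_add, zpow_add]
    have hinner : c ^ (-d) * b * c ^ ((m : ℤ) - d) = b := by
      have h3 : c ^ ((m : ℤ) - d) = c ^ (-d) := by
        rw [sub_eq_add_neg, zpow_add, zpow_natCast, hcm, one_mul]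
      rw [h3, mul_assoc, hsc (-d), neg_neg, ← mul_assoc, ← zpow_add]
      simp
    calc c ^ (-(v1:ℤ)) * c ^ (-d) * b * (c ^ ((m:ℤ) - d) * c ^ (v2:ℤ))
        = c ^ (-(v1:ℤ)) * (c ^ (-d) * b * c ^ ((m:ℤ) - d)) * c ^ (v2:ℤ) := by
          simp [mul_assoc]
      _ = c ^ (-(v1:ℤ)) * b * c ^ (v2:ℤ) := by rw [hinner]
  apply Equiv.ext
  rintro ⟨t, ε⟩
  rw [sigma_pow_apply, ← ha, ← hb, ← hc, hcm]
  have hsum : ∑ n ∈ Finset.range (2 * m), (if t = fseq cs i j n then (1 : ZMod 2) else 0) = 0 := by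
    rw [two_mul, Finset.sum_range_add]
    have : ∀ n, (if t = fseq cs i j (m + n) then (1 : ZMod 2) else 0)
        = if t = fseq cs i j n then (1 : ZMod 2) else 0 := by
      intro n; rw [hfseq n]
    rw [Finset.sum_congr rfl (fun n _ => this n)]
    have : ∀ u : ZMod 2, u + u = 0 := by decide
    exact this _
  rw [hsum, add_zero]
  simp

/-- The homomorphism from `W` to permutations of `W × ZMod 2`. -/
noncomputable def Phi : W →* Equiv.Perm (W × ZMod 2) :=
  cs.lift ⟨fun i => sigma cs i, isLiftable cs⟩

lemma Phi_simple (i : B) : Phi cs (s i) = sigma cs i := cs.lift_apply_simple (isLiftable cs) i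

/-- The parity of the number of times `t` occurs in an inversion sequence of a word for `w`. -/
noncomputable def Nn (w t : W) : ZMod 2 := ((Phi cs) w (t, 0)).2

open scoped Classical in
lemma Phi_apply (w : W) : ∀ (t : W) (ε : ZMod 2),
    Phi cs w (t, ε) = (w * t * w⁻¹, ε + Nn cs w t) := by
  induction w using cs.simple_induction_left with
  | one =>
    intro t ε
    have h0 : ∀ ε' : ZMod 2, Phi cs 1 (t, ε') = (t, ε') := by
      intro ε'; rw [map_one]; rfl
    have : Nn cs 1 t = 0 := by rw [Nn, h0 0]
    rw [h0 ε, this, add_zero, one_mul, inv_one, mul_one]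
  | mul_simple_left u i hu =>
    intro t ε
    have key : ∀ ε' : ZMod 2, Phi cs (s i * u) (t, ε') =
        ((s i * u) * t * (s i * u)⁻¹,
          ε' + (Nn cs u t + if u * t * u⁻¹ = s i then 1 else 0)) := by
      intro ε'
      rw [map_mul, Equiv.Perm.mul_apply, hu t ε', Phi_simple, sigma_apply]
      rw [Prod.mk.injEq]
      refine ⟨?_, by rw [add_assoc]⟩
      rw [mul_inv_rev, cs.inv_simple]
      simp [mul_assoc]
    have hN : Nn cs (s i * u) t = Nn cs u t + if u * t * u⁻¹ = s i then 1 else 0 := by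
      rw [Nn, key 0, zero_add]
    rw [key ε, hN]

lemma Nn_one (t : W) : Nn cs 1 t = 0 := by rw [Nn, map_one]; rfl

open scoped Classical in
lemma Nn_simple (i : B) (t : W) : Nn cs (s i) t = if t = s i then 1 else 0 := by
  rw [Nn, Phi_simple, sigma_apply]
  simp

lemma Nn_mul (x y t : W) : Nn cs (x * y) t = Nn cs y t + Nn cs x (y * t * y⁻¹) := by
  rw [Nn, map_mul, Equiv.Perm.mul_apply, Phi_apply, Phi_apply]
  simp [Nn]

lemma Nn_inv (x t : W) : Nn cs x⁻¹ t = Nn cs x (x⁻¹ * t * x) := by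
  have h := Nn_mul cs x x⁻¹ t
  rw [mul_inv_cancel, inv_inv, Nn_one] at h
  have hz : ∀ u v : ZMod 2, 0 = u + v → u = v := by decide
  exact hz _ _ h

lemma Nn_self {t : W} (ht : cs.IsReflection t) : Nn cs t t = 1 := by
  obtain ⟨x, i, rfl⟩ := ht
  rw [mul_assoc]
  set T := x * (s i * x⁻¹) with hT
  have harg : (s i * x⁻¹) * T * (s i * x⁻¹)⁻¹ = s i := by
    rw [hT, mul_inv_rev, inv_inv, cs.inv_simple]
    simp [mul_assoc, cs.simple_mul_simple_self]
  have harg2 : x⁻¹ * T * x⁻¹⁻¹ = s i := by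
    rw [hT, inv_inv]
    simp [mul_assoc]
  have h1 : Nn cs T T = Nn cs (s i * x⁻¹) T + Nn cs x (s i) := by
    nth_rewrite 1 [hT]
    rw [Nn_mul, harg]
  have h2 : Nn cs (s i * x⁻¹) T = Nn cs x⁻¹ T + 1 := by
    rw [Nn_mul, Nn_simple, harg2]
    have : x⁻¹ * T * x⁻¹⁻¹ = s i := harg2
    simp [harg2]
  have h3 : Nn cs x⁻¹ T = Nn cs x (s i) := by
    rw [Nn_inv]
    congr 1
    calc x⁻¹ * T * x = x⁻¹ * T * x⁻¹⁻¹ := by rw [inv_inv]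
      _ = s i := harg2
  rw [h1, h2, h3]
  have : ∀ u : ZMod 2, u + 1 + u = 1 := by decide
  exact this _

theorem Nn_eq_zero : ∀ (n : ℕ) (w t : W), cs.length w = n → cs.IsReflection t →
    cs.length w < cs.length (w * t) → Nn cs w t = 0 := by
  intro n
  induction n using Nat.strong_induction_on with
  | _ n ih =>
    intro w t hn ht hlt
    rcases eq_or_ne w 1 with rfl | hw
    · exact Nn_one cs t
    · obtain ⟨i, hi⟩ := cs.exists_leftDescent_of_ne_one hw
      set u := s i * w with hu
      have hw' : w = s i * u := by rw [hu, ← mul_assoc, cs.simple_mul_simple_self, one_mul]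
      have hlu : ℓ u < ℓ w := hi
      have hut : u * t = s i * (w * t) := by rw [hu, mul_assoc]
      have h2 : ℓ u < ℓ (u * t) := by
        have h3 := cs.length_simple_mul (w * t) i
        rw [← hut] at h3
        omega
      have hcond : u * t * u⁻¹ ≠ s i := by
        intro h
        have hwt : w * t = u := by
          have huts : u * t = s i * u := by
            calc u * t = (u * t * u⁻¹) * u := by group
            _ = s i * u := by rw [h]
          rw [hw', mul_assoc, huts, ← mul_assoc, cs.simple_mul_simple_self, one_mul]
        rw [hwt] at hlt
        omega
      have hNu : Nn cs u t = 0 := ih (ℓ u) (by omega) u t rfl ht h2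
      rw [hw', Nn_mul, hNu, Nn_simple, if_neg hcond]
      simp

theorem Nn_eq_one {w t : W} (ht : cs.IsReflection t) (hlt : ℓ (w * t) < ℓ w) :
    Nn cs w t = 1 := by
  have hvt : (w * t) * t = w := by rw [mul_assoc, ht.mul_self, mul_one]
  have h0 : Nn cs (w * t) t = 0 :=
    Nn_eq_zero cs (ℓ (w * t)) (w * t) t rfl ht (by rw [hvt]; exact hlt)
  have htt : t * t * t⁻¹ = t := by rw [ht.mul_self, one_mul, ht.inv]
  calc Nn cs w t = Nn cs ((w * t) * t) t := by rw [hvt]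
    _ = Nn cs t t + Nn cs (w * t) (t * t * t⁻¹) := Nn_mul cs _ _ _
    _ = 1 + 0 := by rw [htt, Nn_self cs ht, h0]
    _ = 1 := by decide

lemma Nn_eq_zero_of_not_mem (ω : List B) (t : W) (h : t ∉ cs.rightInvSeq ω) :
    Nn cs (π ω) t = 0 := by
  induction ω with
  | nil => simpa using Nn_one cs t
  | cons i ω ih =>
    have hris : cs.rightInvSeq (i :: ω) = ((π ω)⁻¹ * s i * π ω) :: cs.rightInvSeq ω := rfl
    rw [hris, List.mem_cons] at h
    push_neg at h
    have hc : ¬ (π ω * t * (π ω)⁻¹ = s i) := by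
      intro hh
      apply h.1
      rw [← hh]
      group
    rw [cs.wordProd_cons, Nn_mul, Nn_simple, ih h.2, if_neg hc]
    simp

lemma mem_rightInvSeq_of_lt {ω : List B} {t : W} (ht : cs.IsReflection t)
    (hlt : ℓ (π ω * t) < ℓ (π ω)) : t ∈ cs.rightInvSeq ω := by
  by_contra h
  have h0 := Nn_eq_zero_of_not_mem cs ω t h
  rw [Nn_eq_one cs ht hlt] at h0
  exact one_ne_zero h0

lemma exchange' {ω : List B} {i : B} (hlt : ℓ (π ω * s i) < ℓ (π ω)) :
    ∃ j < ω.length, π ω * s i = π (ω.eraseIdx j) := by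
  have hmem := mem_rightInvSeq_of_lt cs (cs.isReflection_simple i) hlt
  rw [List.mem_iff_getElem] at hmem
  obtain ⟨j, hj, hget⟩ := hmem
  have hj' : j < ω.length := by rwa [cs.length_rightInvSeq] at hj
  refine ⟨j, hj', ?_⟩
  have hkey := cs.wordProd_mul_getD_rightInvSeq ω j
  rw [← hkey]
  congr 1
  rw [List.getD_eq_getElem _ _ hj, hget]

lemma deletion {ω : List B} (h : ¬ cs.IsReduced ω) :
    ∃ ω' : List B, π ω' = π ω ∧ ω'.length + 2 = ω.length ∧ ∀ b ∈ ω', b ∈ ω := by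
  have hex : ∃ j, j < ω.length ∧ ℓ (π (ω.take (j + 1))) < ℓ (π (ω.take j)) := by
    by_contra hno
    push_neg at hno
    have hstep : ∀ k, k ≤ ω.length → ℓ (π (ω.take k)) = k := by
      intro k
      induction k with
      | zero => simp
      | succ k ihk =>
        intro hk1
        have hk : k < ω.length := by omega
        have e1 : ω.take (k + 1) = ω.take k ++ [ω[k]] := by
          rw [List.take_succ]
          simp [List.getElem?_eq_getElem hk]
        have e2 : π (ω.take (k + 1)) = π (ω.take k) * s (ω[k]) := by
          rw [e1, cs.wordProd_append, cs.wordProd_singleton]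
        have h3 := cs.length_mul_simple (π (ω.take k)) (ω[k])
        rw [← e2] at h3
        have h4 := hno k hk
        have h5 := ihk (by omega)
        omega
    have hfin := hstep ω.length le_rfl
    rw [List.take_length] at hfin
    exact h hfin
  obtain ⟨j, hj, hlt⟩ := hex
  have e1 : ω.take (j + 1) = ω.take j ++ [ω[j]] := by
    rw [List.take_succ]
    simp [List.getElem?_eq_getElem hj]
  have e2 : π (ω.take (j + 1)) = π (ω.take j) * s (ω[j]) := by
    rw [e1, cs.wordProd_append, cs.wordProd_singleton]
  rw [e2] at hlt
  obtain ⟨k, hk, heq⟩ := exchange' cs hlt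
  rw [List.length_take] at hk
  have hkj : k < j := by omega
  refine ⟨(ω.take j).eraseIdx k ++ ω.drop (j + 1), ?_, ?_, ?_⟩
  · calc π ((ω.take j).eraseIdx k ++ ω.drop (j + 1))
        = π ((ω.take j).eraseIdx k) * π (ω.drop (j + 1)) := cs.wordProd_append _ _
      _ = (π (ω.take j) * s (ω[j])) * π (ω.drop (j + 1)) := by rw [heq]
      _ = π (ω.take (j + 1)) * π (ω.drop (j + 1)) := by rw [e2]
      _ = π (ω.take (j + 1) ++ ω.drop (j + 1)) := (cs.wordProd_append _ _).symm
      _ = π ω := by rw [List.take_append_drop]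
  · rw [List.length_append, List.length_eraseIdx, List.length_take, List.length_drop]
    rw [if_pos (by omega : k < min j ω.length)]
    omega
  · intro b hb
    rcases List.mem_append.mp hb with hb | hb
    · exact List.take_subset j ω (List.eraseIdx_subset hb)
    · exact List.drop_subset _ ω hb



lemma exists_Yword {Y : Set B} {c : W} (hc : c ∈ cs.parabolic Y) :
    ∃ ω : List B, (∀ b ∈ ω, b ∈ Y) ∧ π ω = c := by
  unfold CoxeterSystem.parabolic at hc
  induction hc using Subgroup.closure_induction with
  | mem x hx =>
    obtain ⟨i, hi, rfl⟩ := hx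
    exact ⟨[i], by simp [hi], cs.wordProd_singleton i⟩
  | one => exact ⟨[], by simp, cs.wordProd_nil⟩
  | mul x y hx hy ihx ihy =>
    obtain ⟨ω1, h1, rfl⟩ := ihx
    obtain ⟨ω2, h2, rfl⟩ := ihy
    refine ⟨ω1 ++ ω2, ?_, (cs.wordProd_append ω1 ω2)⟩
    intro b hb
    rcases List.mem_append.mp hb with h | h
    exacts [h1 b h, h2 b h]
  | inv x hx ihx =>
    obtain ⟨ω, h1, rfl⟩ := ihx
    exact ⟨ω.reverse, fun b hb => h1 b (List.mem_reverse.mp hb), cs.wordProd_reverse ω⟩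

lemma exists_reduced_Yword_aux : ∀ (n : ℕ) (ω : List B), ω.length = n → ∀ {Y : Set B},
    (∀ b ∈ ω, b ∈ Y) →
    ∃ ω' : List B, (∀ b ∈ ω', b ∈ Y) ∧ π ω' = π ω ∧ cs.IsReduced ω' := by
  intro n
  induction n using Nat.strong_induction_on with
  | _ n ih =>
    intro ω hlen Y hY
    by_cases hred : cs.IsReduced ω
    · exact ⟨ω, hY, rfl, hred⟩
    · obtain ⟨ω2, hπ2, hlen2, hsub⟩ := deletion cs hred
      obtain ⟨ω', h1, h2, h3⟩ := ih ω2.length (by omega) ω2 rfl (fun b hb => hY b (hsub b hb))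
      exact ⟨ω', h1, by rw [h2, hπ2], h3⟩

lemma exists_rightDescent_in {Y : Set B} {c : W} (hc : c ∈ cs.parabolic Y) (hne : c ≠ 1) :
    ∃ i ∈ Y, ℓ (c * s i) + 1 = ℓ c := by
  obtain ⟨ω0, hY0, hπ0⟩ := exists_Yword cs hc
  obtain ⟨ω, hY, hπ, hred⟩ := exists_reduced_Yword_aux cs ω0.length ω0 rfl hY0
  have hπc : π ω = c := by rw [hπ, hπ0]
  have hne' : ω ≠ [] := by
    rintro rfl
    exact hne (by rw [← hπc]; exact cs.wordProd_nil)
  set i := ω.getLast hne' with hi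
  have hiY : i ∈ Y := hY i (ω.getLast_mem hne')
  have hωsplit : π ω = π ω.dropLast * s i := by
    conv_lhs => rw [← List.dropLast_append_getLast hne']
    rw [cs.wordProd_append, cs.wordProd_singleton]
  have hcs : c * s i = π ω.dropLast := by
    rw [← hπc, hωsplit, mul_assoc, cs.simple_mul_simple_self, mul_one]
  refine ⟨i, hiY, ?_⟩
  have h1 : ℓ (π ω.dropLast) ≤ ω.dropLast.length := cs.length_wordProd_le _
  have h2 := cs.length_mul_simple (π ω.dropLast) i
  rw [← hωsplit] at h2
  have h4 : ℓ (π ω) = ω.length := hred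
  have h5 : ω.dropLast.length = ω.length - 1 := List.length_dropLast
  have h6 : 0 < ω.length := List.length_pos_iff.mpr hne'
  rw [hcs, ← hπc]
  omega

lemma simple_mem_parabolic {Y : Set B} {i : B} (hi : i ∈ Y) : s i ∈ cs.parabolic Y :=
  Subgroup.subset_closure ⟨i, hi, rfl⟩

lemma parabolic_mono {X Y : Set B} (h : X ⊆ Y) : cs.parabolic X ≤ cs.parabolic Y :=
  Subgroup.closure_mono (Set.image_mono h)

theorem length_add : ∀ (n : ℕ) {Y : Set B} {d c : W},
    (∀ b ∈ cs.parabolic Y, ℓ d ≤ ℓ (d * b)) →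
    c ∈ cs.parabolic Y → ℓ c = n → ℓ (d * c) = ℓ d + ℓ c := by
  intro n
  induction n using Nat.strong_induction_on with
  | _ n ih =>
    intro Y d c hd hc hn
    rcases eq_or_ne c 1 with rfl | hne
    · simp
    · obtain ⟨i, hiY, hdesc⟩ := exists_rightDescent_in cs hc hne
      set c' := c * s i with hc'
      have hc'mem : c' ∈ cs.parabolic Y := mul_mem hc (simple_mem_parabolic cs hiY)
      have hcc : c = c' * s i := by rw [hc', mul_assoc, cs.simple_mul_simple_self, mul_one]
      have hlc' : ℓ c' + 1 = ℓ c := hdesc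
      have ihc' : ℓ (d * c') = ℓ d + ℓ c' := ih (ℓ c') (by omega) hd hc'mem rfl
      have hdc : d * c = (d * c') * s i := by rw [hcc, ← mul_assoc]
      have hcases := cs.length_mul_simple (d * c') i
      rw [← hdc] at hcases
      rcases hcases with hup | hdown
      · rw [hup, ihc']; omega
      · exfalso
        obtain ⟨ωd, hωdlen, hωd⟩ := cs.exists_reduced_word d
        obtain ⟨ω0, hY0, hπ0⟩ := exists_Yword cs hc'mem
        obtain ⟨ωc, hωcY, hωcπ, hωcred⟩ := exists_reduced_Yword_aux cs ω0.length ω0 rfl hY0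
        have hωcc : π ωc = c' := by rw [hωcπ, hπ0]
        have hπ : π (ωd ++ ωc) = d * c' := by rw [cs.wordProd_append, ← hωd, hωcc]
        have hlt : ℓ (π (ωd ++ ωc) * s i) < ℓ (π (ωd ++ ωc)) := by rw [hπ, ← hdc]; omega
        obtain ⟨k, hk, heq⟩ := exchange' cs hlt
        rw [hπ, ← hdc] at heq
        by_cases hcase : k < ωd.length
        · rw [List.eraseIdx_append_of_lt_length hcase] at heq
          have heq2 : d * (c * c'⁻¹) = π (ωd.eraseIdx k) := by
            rw [← mul_assoc, heq, cs.wordProd_append, hωcc, mul_assoc, mul_inv_cancel, mul_one]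
          have hmem : c * c'⁻¹ ∈ cs.parabolic Y := mul_mem hc (inv_mem hc'mem)
          have hge := hd _ hmem
          rw [heq2] at hge
          have hle : ℓ (π (ωd.eraseIdx k)) ≤ (ωd.eraseIdx k).length := cs.length_wordProd_le _
          rw [List.length_eraseIdx, if_pos hcase] at hle
          have := hωdlen.eq; rw [← hωd] at this
          omega
        · push_neg at hcase
          rw [List.eraseIdx_append_of_length_le hcase] at heq
          have heq2 : c = π (ωc.eraseIdx (k - ωd.length)) := by
            rw [cs.wordProd_append, ← hωd] at heq
            exact mul_left_cancel heq
          have hle : ℓ c ≤ (ωc.eraseIdx (k - ωd.length)).length := by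
            rw [heq2]; exact cs.length_wordProd_le _
          have hlenc : ωc.length = ℓ c' := by rw [← hωcc]; exact hωcred.symm
          have hkc : k - ωd.length < ωc.length := by
            rw [List.length_append] at hk; omega
          rw [List.length_eraseIdx, if_pos hkc] at hle
          omega

end CdsAux

/-- The relation `≤` is a partial order on `W × S^f`. -/
theorem cdsLE_partialOrder {B W : Type*} [Group W] {M : CoxeterMatrix B}
    (cs : CoxeterSystem M W) :
    (∀ p : W × Set B, cs.IsSpherical p.2 → cs.cdsLE p p) ∧
    (∀ p q : W × Set B, cs.IsSpherical p.2 → cs.IsSpherical q.2 →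
      cs.cdsLE p q → cs.cdsLE q p → p = q) ∧
    (∀ p q r : W × Set B, cs.IsSpherical p.2 → cs.IsSpherical q.2 →
      cs.IsSpherical r.2 → cs.cdsLE p q → cs.cdsLE q r → cs.cdsLE p r) := by
  refine ⟨?_, ?_, ?_⟩
  · rintro ⟨u, X⟩ -
    refine ⟨subset_rfl, ?_, ?_⟩
    · rw [inv_mul_cancel]
      exact one_mem _
    · intro a ha
      rw [inv_mul_cancel, one_mul, cs.length_one]
      exact Nat.zero_le _
  · rintro ⟨u, X⟩ ⟨v, Y⟩ - - ⟨hXY, hmem, hred⟩ ⟨hYX, hmem', hred'⟩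
    have hXeq : X = Y := subset_antisymm hXY hYX
    subst hXeq
    have h1 : (v⁻¹ * u)⁻¹ ∈ cs.parabolic X := inv_mem hmem
    have h2 := hred _ h1
    rw [mul_inv_cancel, cs.length_one] at h2
    have h4 : v⁻¹ * u = 1 := cs.length_eq_zero_iff.mp (Nat.le_zero.mp h2)
    have huv : u = v := by
      calc u = v * (v⁻¹ * u) := by group
        _ = v * 1 := by rw [h4]
        _ = v := mul_one v
    rw [Prod.mk.injEq]
    exact ⟨huv, rfl⟩
  · rintro ⟨u, X⟩ ⟨v, Y⟩ ⟨w, Z⟩ - - - ⟨hXY, hmemq, hredp⟩ ⟨hYZ, hmemr, hredq⟩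
    refine ⟨hXY.trans hYZ, ?_, ?_⟩
    · have h0 : w⁻¹ * u = (w⁻¹ * v) * (v⁻¹ * u) := by group
      rw [h0]
      exact mul_mem hmemr (CdsAux.parabolic_mono cs hYZ hmemq)
    · intro a ha
      have haY : a ∈ cs.parabolic Y := CdsAux.parabolic_mono cs hXY ha
      have hcaY : (v⁻¹ * u) * a ∈ cs.parabolic Y := mul_mem hmemq haY
      have e1 : cs.length ((w⁻¹ * v) * (v⁻¹ * u))
          = cs.length (w⁻¹ * v) + cs.length (v⁻¹ * u) :=
        CdsAux.length_add cs (cs.length (v⁻¹ * u)) hredq hmemq rfl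
      have e2 : cs.length ((w⁻¹ * v) * ((v⁻¹ * u) * a))
          = cs.length (w⁻¹ * v) + cs.length ((v⁻¹ * u) * a) :=
        CdsAux.length_add cs (cs.length ((v⁻¹ * u) * a)) hredq hcaY rfl
      have e3 : cs.length (v⁻¹ * u) ≤ cs.length ((v⁻¹ * u) * a) := hredp a ha
      have g1 : w⁻¹ * u = (w⁻¹ * v) * (v⁻¹ * u) := by group
      have g2 : w⁻¹ * u * a = (w⁻¹ * v) * ((v⁻¹ * u) * a) := by group
      rw [g2, g1, e1, e2]
      omega
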